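/- Let p > 2 be a prime. Then the sum over all triples (m1, m2, m3) of nonnegative integers with m1+m2+m3 < p of the square of the multinomial coefficient (m1+m2+m3)!/(m1! m2! m3!) times (H_{m1+m2+m3} - H_{m1}) is congruent to 0 modulo p (as rational numbers, i.e., its p-adic valuation is at least 1). -/

import Mathlib

/-- The `n`-th harmonic number as a rational number. -/
def H (n : ℕ) : ℚ := ∑ j ∈ Finset.range n, 1 / ((j : ℚ) + 1)

/-- The multinomial coefficient (a+b+c)! / (a! b! c!). -/
def multinomial3 (a b c : ℕ) : ℕ :=
  (a + b + c).factorial / (a.factorial * b.factorial * c.factorial)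

open Finset


lemma cast_descFactorial {R : Type*} [CommRing R] (n m : ℕ) :
    ((n.descFactorial m : ℕ) : R) = ∏ k ∈ range m, ((n : R) - k) := by
  rcases le_or_gt m n with h | h
  · rw [Nat.descFactorial_eq_prod_range, Nat.cast_prod]
    exact Finset.prod_congr rfl fun k hk => by
      have : k ≤ n := le_trans (le_of_lt (mem_range.mp hk)) h
      push_cast [this]; ring
  · rw [Nat.descFactorial_eq_zero_iff_lt.mpr h, Nat.cast_zero]
    exact (Finset.prod_eq_zero (mem_range.mpr h) (by simp)).symm

lemma sum_choose_sq_eq (p : ℕ) [Fact p.Prime] (j m : ℕ) (hj1 : 1 ≤ j) (hj2 : j ≤ p - 1) :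
    (∑ a ∈ range p, if a < j ∧ j ≤ a + m ∧ a + m < p
        then (((a+m).choose a : ℕ) : ZMod p)^2 else 0) * ((m.factorial : ZMod p))^2
    = ∑ t ∈ range m, (∏ k ∈ range m, (((j+t : ℕ) : ZMod p) - k))^2 := by
  have hp : p.Prime := Fact.out
  have hp1 : 1 ≤ p := hp.one_lt.le
  rw [Finset.sum_mul]
  have step1 : ∀ a ∈ range p,
      (if a < j ∧ j ≤ a + m ∧ a + m < p then (((a+m).choose a : ℕ) : ZMod p)^2 else 0)
        * ((m.factorial : ZMod p))^2
      = if a < j ∧ j ≤ a + m ∧ a + m < p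
          then (∏ k ∈ range m, (((a+m : ℕ) : ZMod p) - k))^2 else 0 := by
    intro a _
    rw [ite_mul, zero_mul]
    congr 1
    rw [← mul_pow, ← Nat.cast_mul, mul_comm (((a+m).choose a : ℕ)) (m.factorial),
      Nat.choose_symm_add, ← Nat.descFactorial_eq_factorial_mul_choose, cast_descFactorial]
  rw [Finset.sum_congr rfl step1]
  have step2 : ∀ t ∈ range m,
      (∏ k ∈ range m, (((j+t : ℕ) : ZMod p) - k))^2
      = if m ≤ j + t ∧ j + t < p
          then (∏ k ∈ range m, (((j+t : ℕ) : ZMod p) - k))^2 else 0 := by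
    intro t ht
    have ht' : t < m := mem_range.mp ht
    by_cases h : m ≤ j + t ∧ j + t < p
    · rw [if_pos h]
    · rw [if_neg h]
      push_neg at h
      rcases lt_or_ge (j+t) m with hlt | hge
      · rw [Finset.prod_eq_zero (mem_range.mpr hlt) (by simp), zero_pow two_ne_zero]
      · have hp' : p ≤ j + t := h hge
        set u := j + t - p with hu
        have hum : u < m := by omega
        have hcast : ((j + t : ℕ) : ZMod p) = (u : ℕ) := by
          have : j + t = u + p := by omega
          rw [this, Nat.cast_add, ZMod.natCast_self, add_zero]
        rw [Finset.prod_eq_zero (mem_range.mpr hum) (by rw [hcast]; exact sub_self _),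
          zero_pow two_ne_zero]
  rw [Finset.sum_congr rfl step2]
  rw [← Finset.sum_filter, ← Finset.sum_filter]
  refine Finset.sum_nbij' (fun a => a + m - j) (fun t => j + t - m) ?_ ?_ ?_ ?_ ?_
  · intro a ha
    simp only [mem_filter, mem_range] at ha ⊢
    omega
  · intro t ht
    simp only [mem_filter, mem_range] at ht ⊢
    omega
  · intro a ha
    simp only [mem_filter, mem_range] at ha
    show j + (a + m - j) - m = a
    omega
  · intro t ht
    simp only [mem_filter, mem_range] at ht
    show j + t - m + m - j = t
    omega
  · intro a ha
    simp only [mem_filter, mem_range] at ha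
    have : j + (a + m - j) = a + m := by omega
    rw [this]

lemma prod_reflect {R : Type*} [CommRing R] (m : ℕ) (x : R) :
    ∏ k ∈ range m, (((m:R) - 1 - x) - k) = (-1)^m * ∏ k ∈ range m, (x - k) := by
  rcases Nat.eq_zero_or_pos m with rfl | hm
  · simp
  have neg_prod : ∀ (f : ℕ → R), ∏ k ∈ range m, (-(f k)) = (-1)^m * ∏ k ∈ range m, f k := fun f => by
    rw [show (fun k => -(f k)) = fun k => (-1) * f k from funext fun k => by ring]
    rw [Finset.prod_mul_distrib, Finset.prod_const, Finset.card_range]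
  calc ∏ k ∈ range m, (((m:R) - 1 - x) - k)
      = ∏ k ∈ range m, (-(x - ((m - 1 - k : ℕ) : R))) := by
        refine Finset.prod_congr rfl fun k hk => ?_
        have hk' : k < m := mem_range.mp hk
        have : ((m - 1 - k : ℕ) : R) = (m : R) - 1 - k := by
          have h2 : ((m - 1 - k : ℕ) : R) + ((1 + k : ℕ) : R) = ((m : ℕ) : R) := by
            rw [← Nat.cast_add]; congr 1; omega
          push_cast at h2; linear_combination h2
        rw [this]; ring
    _ = (-1)^m * ∏ k ∈ range m, (x - ((m - 1 - k : ℕ) : R)) := neg_prod _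
    _ = (-1)^m * ∏ k ∈ range m, (x - k) := by
        rw [Finset.prod_range_reflect (fun k => x - (k:R)) m]

lemma key_congr (p : ℕ) [Fact p.Prime] (j m : ℕ) (hj1 : 1 ≤ j) (hj2 : j ≤ p - 1) :
    (∑ a ∈ range p, if a < j ∧ j ≤ a + m ∧ a + m < p
        then (((a+m).choose a : ℕ) : ZMod p)^2 else 0)
    = ∑ a ∈ range p, if a < p - j ∧ p - j ≤ a + m ∧ a + m < p
        then (((a+m).choose a : ℕ) : ZMod p)^2 else 0 := by
  have hp : p.Prime := Fact.out
  have hp1 : 1 < p := hp.one_lt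
  rcases Nat.eq_zero_or_pos m with rfl | hm0
  · refine (Finset.sum_eq_zero fun a _ => if_neg (by omega)).trans
      (Finset.sum_eq_zero fun a _ => if_neg (by omega)).symm
  rcases le_or_gt p m with hpm | hmp
  · refine (Finset.sum_eq_zero fun a _ => if_neg (by omega)).trans
      (Finset.sum_eq_zero fun a _ => if_neg (by omega)).symm
  -- now 1 ≤ m < p
  set g : ℕ → ZMod p := fun n => (∏ k ∈ range m, ((n : ZMod p) - k))^2 with hg
  have h1 := sum_choose_sq_eq p j m hj1 hj2
  have h2 := sum_choose_sq_eq p (p-j) m (by omega) (by omega)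
  have hrefl : ∀ t ∈ range m, g (p - j + t) = g (j + (m - 1 - t)) := by
    intro t ht
    have ht' : t < m := mem_range.mp ht
    have hx : ((j + (m - 1 - t) : ℕ) : ZMod p) = (j : ZMod p) + ((m : ZMod p) - 1 - t) := by
      have : ((m - 1 - t : ℕ) : ZMod p) + ((1 + t : ℕ) : ZMod p) = ((m : ℕ) : ZMod p) := by
        rw [← Nat.cast_add]; congr 1; omega
      push_cast at this ⊢
      linear_combination this
    have harg : ((p - j + t : ℕ) : ZMod p)
        = (m : ZMod p) - 1 - ((j + (m - 1 - t) : ℕ) : ZMod p) := by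
      have hpj : ((p - j : ℕ) : ZMod p) + ((j : ℕ) : ZMod p) = ((p : ℕ) : ZMod p) := by
        rw [← Nat.cast_add]; congr 1; omega
      rw [ZMod.natCast_self] at hpj
      rw [hx]
      push_cast
      linear_combination hpj
    show (∏ k ∈ range m, (((p - j + t : ℕ) : ZMod p) - k))^2 = _
    rw [harg, prod_reflect, mul_pow, ← pow_mul, mul_comm m 2, pow_mul, neg_one_sq, one_pow,
      one_mul]
  have hsum : ∑ t ∈ range m, g (p - j + t) = ∑ t ∈ range m, g (j + t) := by
    rw [Finset.sum_congr rfl hrefl]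
    exact Finset.sum_range_reflect (fun t => g (j + t)) m
  have hfac : ((m.factorial : ZMod p))^2 ≠ 0 := by
    apply pow_ne_zero
    rw [Ne, ZMod.natCast_eq_zero_iff]
    rw [hp.dvd_factorial]
    omega
  apply mul_right_cancel₀ hfac
  rw [h1, h2, hsum]

lemma multinomial3_eq (a b c : ℕ) :
    multinomial3 a b c = (a+b+c).choose a * (b+c).choose b := by
  unfold multinomial3
  have h1 : (a+b+c).choose a * a.factorial * (b+c).factorial = (a+b+c).factorial := by
    have := Nat.choose_mul_factorial_mul_factorial (show a ≤ a+b+c by omega)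
    rwa [show a+b+c-a = b+c by omega] at this
  have h2 : (b+c).choose b * b.factorial * c.factorial = (b+c).factorial := by
    have := Nat.choose_mul_factorial_mul_factorial (show b ≤ b+c by omega)
    rwa [show b+c-b = c by omega] at this
  apply Nat.div_eq_of_eq_mul_left (by positivity)
  rw [← h1, ← h2]; ring

def Wp (p j : ℕ) : ℕ :=
  ∑ m1 ∈ range p, ∑ m2 ∈ range p, ∑ m3 ∈ range p,
    if m1 < j ∧ j ≤ m1+m2+m3 ∧ m1+m2+m3 < p then (multinomial3 m1 m2 m3)^2 else 0

lemma cast_Wp (p j : ℕ) : ((Wp p j : ℕ) : ZMod p)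
    = ∑ m2 ∈ range p, ∑ m3 ∈ range p,
        (∑ m1 ∈ range p, if m1 < j ∧ j ≤ m1+m2+m3 ∧ m1+m2+m3 < p
            then (((m1+m2+m3).choose m1 : ℕ) : ZMod p)^2 else 0)
          * (((m2+m3).choose m2 : ℕ) : ZMod p)^2 := by
  unfold Wp
  push_cast
  rw [Finset.sum_comm]
  refine Finset.sum_congr rfl fun m2 _ => ?_
  rw [Finset.sum_comm]
  refine Finset.sum_congr rfl fun m3 _ => ?_
  rw [Finset.sum_mul]
  refine Finset.sum_congr rfl fun m1 _ => ?_
  rw [multinomial3_eq, ite_mul, zero_mul]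
  push_cast
  split <;> ring

lemma triple_expand (p m1 n : ℕ) (hm : m1 ≤ n) (x : ℚ) :
    (if n < p then x * (H n - H m1) else 0)
    = ∑ i ∈ range p, if m1 < i+1 ∧ i+1 ≤ n ∧ n < p then x / ((i:ℚ)+1) else 0 := by
  by_cases hnp : n < p
  · rw [if_pos hnp]
    have hH : H n - H m1 = ∑ i ∈ Ico m1 n, 1/((i:ℚ)+1) :=
      (Finset.sum_Ico_eq_sub _ hm).symm
    rw [hH, Finset.mul_sum]
    have hset : (range p).filter (fun i => m1 < i+1 ∧ i+1 ≤ n ∧ n < p) = Ico m1 n := by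
      ext i; simp only [mem_filter, mem_range, mem_Ico]; omega
    rw [← Finset.sum_filter, hset]
    exact Finset.sum_congr rfl fun i _ => by rw [mul_one_div]
  · rw [if_neg hnp]
    exact (Finset.sum_eq_zero fun i _ => if_neg (by tauto)).symm

lemma S_eq (p : ℕ) :
    (∑ m1 ∈ range p, ∑ m2 ∈ range p, ∑ m3 ∈ range p,
        if m1 + m2 + m3 < p then (multinomial3 m1 m2 m3 : ℚ)^2 * (H (m1+m2+m3) - H m1) else 0)
    = ∑ i ∈ range p, (Wp p (i+1) : ℚ) / ((i:ℚ)+1) := by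
  have step1 : (∑ m1 ∈ range p, ∑ m2 ∈ range p, ∑ m3 ∈ range p,
        if m1 + m2 + m3 < p then (multinomial3 m1 m2 m3 : ℚ)^2 * (H (m1+m2+m3) - H m1) else 0)
      = ∑ m1 ∈ range p, ∑ m2 ∈ range p, ∑ m3 ∈ range p, ∑ i ∈ range p,
          if m1 < i+1 ∧ i+1 ≤ m1+m2+m3 ∧ m1+m2+m3 < p
            then (multinomial3 m1 m2 m3 : ℚ)^2 / ((i:ℚ)+1) else 0 :=
    Finset.sum_congr rfl fun m1 _ => Finset.sum_congr rfl fun m2 _ =>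
      Finset.sum_congr rfl fun m3 _ =>
        triple_expand p m1 (m1+m2+m3) (by omega) _
  rw [step1]
  have step2 : ∀ (f : ℕ → ℕ → ℕ → ℕ → ℚ),
      (∑ m1 ∈ range p, ∑ m2 ∈ range p, ∑ m3 ∈ range p, ∑ i ∈ range p, f m1 m2 m3 i)
      = ∑ i ∈ range p, ∑ m1 ∈ range p, ∑ m2 ∈ range p, ∑ m3 ∈ range p, f m1 m2 m3 i := by
    intro f
    calc (∑ m1 ∈ range p, ∑ m2 ∈ range p, ∑ m3 ∈ range p, ∑ i ∈ range p, f m1 m2 m3 i)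
        = ∑ m1 ∈ range p, ∑ m2 ∈ range p, ∑ i ∈ range p, ∑ m3 ∈ range p, f m1 m2 m3 i :=
          Finset.sum_congr rfl fun m1 _ => Finset.sum_congr rfl fun m2 _ => Finset.sum_comm
      _ = ∑ m1 ∈ range p, ∑ i ∈ range p, ∑ m2 ∈ range p, ∑ m3 ∈ range p, f m1 m2 m3 i :=
          Finset.sum_congr rfl fun m1 _ => Finset.sum_comm
      _ = ∑ i ∈ range p, ∑ m1 ∈ range p, ∑ m2 ∈ range p, ∑ m3 ∈ range p, f m1 m2 m3 i :=
          Finset.sum_comm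
  rw [step2]
  refine Finset.sum_congr rfl fun i _ => ?_
  have hcast : (Wp p (i+1) : ℚ)
      = ∑ m1 ∈ range p, ∑ m2 ∈ range p, ∑ m3 ∈ range p,
          if m1 < i+1 ∧ i+1 ≤ m1+m2+m3 ∧ m1+m2+m3 < p
            then (multinomial3 m1 m2 m3 : ℚ)^2 else 0 := by
    unfold Wp; push_cast; rfl
  rw [hcast, Finset.sum_div]
  refine Finset.sum_congr rfl fun m1 _ => ?_
  rw [Finset.sum_div]
  refine Finset.sum_congr rfl fun m2 _ => ?_
  rw [Finset.sum_div]
  refine Finset.sum_congr rfl fun m3 _ => ?_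
  split
  · rfl
  · rw [zero_div]

lemma Wp_congr (p : ℕ) [Fact p.Prime] (j : ℕ) (hj1 : 1 ≤ j) (hj2 : j ≤ p - 1) :
    ((Wp p j : ℕ) : ZMod p) = ((Wp p (p - j) : ℕ) : ZMod p) := by
  rw [cast_Wp, cast_Wp]
  refine Finset.sum_congr rfl fun m2 _ => Finset.sum_congr rfl fun m3 _ => ?_
  congr 1
  have := key_congr p j (m2+m3) hj1 hj2
  simpa only [← add_assoc] using this

lemma Wp_self (p : ℕ) : Wp p p = 0 :=
  Finset.sum_eq_zero fun m1 _ => Finset.sum_eq_zero fun m2 _ =>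
    Finset.sum_eq_zero fun m3 _ => if_neg (by omega)

theorem stmt_13 (p : ℕ) (hp : p.Prime) (hp2 : 2 < p) :
    padicNorm p
        (∑ m1 ∈ Finset.range p, ∑ m2 ∈ Finset.range p, ∑ m3 ∈ Finset.range p,
          if m1 + m2 + m3 < p then
            (multinomial3 m1 m2 m3 : ℚ)^2 * (H (m1 + m2 + m3) - H m1)
          else 0) ≤ ((p : ℚ))⁻¹ := by
  haveI : Fact p.Prime := ⟨hp⟩
  set g : ℕ → ℚ := fun i => (Wp p (i+1) : ℚ) / ((i:ℚ)+1) with hg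
  rw [S_eq p]
  have htrim : ∑ i ∈ range p, g i = ∑ i ∈ range (p-1), g i := by
    refine (Finset.sum_subset (Finset.range_subset_range.mpr (by omega)) fun x hx hnx => ?_).symm
    have hx' : x = p - 1 := by
      simp only [mem_range] at hx hnx; omega
    have : x + 1 = p := by omega
    simp only [hg, this, Wp_self, Nat.cast_zero, zero_div]
  rw [htrim]
  set A : ℚ := ∑ i ∈ range (p-1), g i with hA
  have hpair : ∀ i ∈ range (p-1), padicNorm p (g i + g (p-1-1-i)) ≤ ((p:ℚ))⁻¹ := by
    intro i hi
    have hi' : i < p - 1 := mem_range.mp hi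
    set j : ℕ := i + 1 with hj
    have hj1 : 1 ≤ j := by omega
    have hj2 : j ≤ p - 1 := by omega
    have hd1 : ((i:ℚ)+1) = ((j : ℕ) : ℚ) := by rw [hj]; push_cast; ring
    have hd2 : (((p-1-1-i : ℕ) : ℚ)+1) = ((p - j : ℕ) : ℚ) := by
      rw [show ((p - j : ℕ) : ℚ) = (((p-1-1-i) + 1 : ℕ) : ℚ) from by congr 1; omega]
      push_cast; ring
    have hjq : ((j : ℕ) : ℚ) ≠ 0 := by positivity
    have hpjq : ((p - j : ℕ) : ℚ) ≠ 0 := by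
      have : 0 < p - j := by omega
      positivity
    have hplus : (p - 1 - 1 - i) + 1 = p - j := by omega
    set N : ℕ := Wp p j * (p - j) + Wp p (p - j) * j with hN
    set D : ℕ := j * (p - j) with hD
    have hexpr : g i + g (p-1-1-i) = (N : ℚ) / (D : ℚ) := by
      simp only [hg, hd1, hd2, hplus, hN, hD]
      push_cast
      field_simp
      rw [hj]; ring
    rw [hexpr]
    have hdvd : p ∣ N := by
      rw [← ZMod.natCast_eq_zero_iff]
      have hcongr := Wp_congr p j hj1 hj2
      have hneg : ((p - j : ℕ) : ZMod p) = -((j : ℕ) : ZMod p) := by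
        have : ((p - j : ℕ) : ZMod p) + ((j : ℕ) : ZMod p) = ((p : ℕ) : ZMod p) := by
          rw [← Nat.cast_add]; congr 1; omega
        rw [ZMod.natCast_self] at this
        linear_combination this
      push_cast [hN]
      rw [← hcongr, hneg]
      push_cast
      ring
    have hnormN : padicNorm p (N : ℚ) ≤ ((p:ℚ))⁻¹ := by
      have h1 : ((p^1 : ℕ) : ℤ) ∣ ((N : ℕ) : ℤ) := by
        push_cast [pow_one]; exact_mod_cast Int.natCast_dvd_natCast.mpr hdvd
      have := (padicNorm.dvd_iff_norm_le (p := p) (n := 1) (z := (N : ℤ))).mp h1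
      simpa using this
    have hnormD : padicNorm p (D : ℚ) = 1 := by
      rw [padicNorm.nat_eq_one_iff]
      intro hdvdD
      rcases (Nat.Prime.dvd_mul hp).mp hdvdD with h | h
      · have := Nat.le_of_dvd (by omega) h; omega
      · have := Nat.le_of_dvd (by omega) h; omega
    rw [padicNorm.div, hnormD, div_one]
    exact hnormN
  have hAA : A + A = ∑ i ∈ range (p-1), (g i + g (p-1-1-i)) := by
    rw [Finset.sum_add_distrib]
    congr 1
    exact (Finset.sum_range_reflect g (p-1)).symm
  have h2A : padicNorm p (A + A) ≤ ((p:ℚ))⁻¹ := by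
    rw [hAA]
    exact padicNorm.sum_le' hpair (by positivity)
  have h2 : padicNorm p (2 : ℚ) = 1 := by
    rw [show (2:ℚ) = ((2:ℕ):ℚ) from by norm_num, padicNorm.nat_eq_one_iff]
    intro h
    have := Nat.le_of_dvd (by norm_num) h
    omega
  have : A + A = 2 * A := by ring
  rw [this, padicNorm.mul, h2, one_mul] at h2A
  exact h2A
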